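/- For n ≥ 1, in the q-shuffle algebra on x,y one has q^{-1} C_n = ( q·x ⋆ (C_{n-1} y) - q^{-1}·(C_{n-1} y) ⋆ x ) / (q - q^{-1}), where C_n = ∑ a_1⋯a_{2n} [1]_q [1+ā_1]_q [1+ā_1+ā_2]_q ⋯ [1+ā_1+⋯+ā_{2n}]_q summed over Catalan words of length 2n, and C_{n-1}y denotes the concatenation product. -/

import Mathlib

open scoped Classical

inductive Letter | x | y
deriving DecidableEq

instance : Fintype Letter := ⟨{Letter.x, Letter.y}, fun a => by cases a <;> simp⟩

/-- x ↦ 1, y ↦ -1 -/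
def bar : Letter → ℤ
  | .x => 1
  | .y => -1

/-- σ swaps the letters x and y. -/
def sigma : Letter → Letter
  | .x => .y
  | .y => .x

/-- the pairing ⟨u,v⟩ : 2 if u = v, -2 otherwise. -/
def pair : Letter → Letter → ℤ := fun u v => if u = v then 2 else -2

noncomputable section

/-- The free associative algebra on the two letters x, y (with its word basis). -/
abbrev V (F : Type*) [Field F] := MonoidAlgebra F (FreeMonoid Letter)

variable {F : Type*} [Field F]

/-- the basis word of V corresponding to a list of letters -/
def wd (w : List Letter) : V F := MonoidAlgebra.single (FreeMonoid.ofList w) 1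

/-- the q-shuffle product of two words, by the left recursion -/
def shuffleWord (q : F) : List Letter → List Letter → V F
  | [], v => wd v
  | u1 :: ut, [] => wd (u1 :: ut)
  | u1 :: ut, v1 :: vt =>
      wd [u1] * shuffleWord q ut (v1 :: vt)
      + q ^ (((u1 :: ut).map (fun a => pair a v1)).sum) •
          (wd [v1] * shuffleWord q (u1 :: ut) vt)
termination_by u v => u.length + v.length

/-- the q-shuffle product on V, extended bilinearly -/
def shuffle (q : F) (a b : V F) : V F :=
  a.coeff.sum fun u cu => b.coeff.sum fun v cv =>
    (cu * cv) • shuffleWord q (FreeMonoid.toList u) (FreeMonoid.toList v)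

/-- the quantum integer [m]_q -/
def qint (q : F) (m : ℤ) : F := (q ^ m - q ^ (-m)) / (q - q⁻¹)

/-- the quantum factorial [m]_q! -/
def qfac (q : F) (m : ℤ) : F := ∏ j ∈ Finset.range m.toNat, qint q ((j : ℤ) + 1)

/-- e_i = ā_1 + ⋯ + ā_i, the i-th elevation of the word w -/
def esum (w : List Letter) (i : ℕ) : ℤ := ((w.take i).map bar).sum

/-- A word is Catalan when all partial sums of bar are nonnegative and the total is zero. -/
def IsCatalan (w : List Letter) : Prop :=
  (∀ i, i ≤ w.length → 0 ≤ esum w i) ∧ esum w w.length = 0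

/-- the coefficient C(w) = ∏_{i=0}^{2n} [1 + e_i]_q -/
def Ccoef (q : F) (w : List Letter) : F :=
  ∏ i ∈ Finset.range (w.length + 1), qint q (1 + esum w i)

/-- the n-th Catalan element C_n = ∑_{w ∈ Cat_n} C(w) w  -/
def catalanElt (q : F) (n : ℕ) : V F :=
  ∑ f : Fin (2 * n) → Letter,
    if IsCatalan (List.ofFn f) then Ccoef q (List.ofFn f) • wd (List.ofFn f) else 0

/-- the antiautomorphism ζ : reverse the word and swap x,y, extended linearly -/
def zeta (a : V F) : V F :=
  a.coeff.sum fun w c =>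
    MonoidAlgebra.single (FreeMonoid.ofList (((FreeMonoid.toList w).map sigma).reverse)) c

/-- The profile of a word: delete from the elevation sequence every interior e_i
    such that e_{i+1}-e_i and e_i-e_{i-1} have the same sign. -/
def profile (w : List Letter) : List ℤ :=
  (List.range (w.length + 1)).filterMap fun i =>
    if i = 0 ∨ i = w.length then some (esum w i)
    else if 0 < (esum w (i + 1) - esum w i) * (esum w i - esum w (i - 1)) then none
    else some (esum w i)

/-- The list (ℓ_0, h_1, ℓ_1, h_2, …, h_r, ℓ_r). -/
def P (r : ℕ) (ℓ h : ℕ → ℤ) : List ℤ :=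
  List.ofFn fun i : Fin (2 * r + 1) =>
    if i.val % 2 = 0 then ℓ (i.val / 2) else h ((i.val + 1) / 2)

/-- the word x^{h_1} y^{h_1-ℓ_1} x^{h_2-ℓ_1} y^{h_2-ℓ_2} ⋯ x^{h_r-ℓ_{r-1}} y^{h_r} -/
def explicitWord (r : ℕ) (ℓ h : ℕ → ℤ) : List Letter :=
  (List.range r).flatMap fun i =>
    List.replicate (h (i + 1) - ℓ i).toNat Letter.x ++
      List.replicate (h (i + 1) - ℓ (i + 1)).toNat Letter.y

/-- C(ℓ_0,h_1,…,h_r,ℓ_r), the ratio of q-factorials attached to a profile. -/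
def Cprof (q : F) (r : ℕ) (ℓ h : ℕ → ℤ) : F :=
  (∏ i ∈ Finset.Icc 1 r, qfac q (h i) * qfac q (h i + 1)) /
    (∏ i ∈ Finset.range (r + 1), qfac q (ℓ i) * qfac q (ℓ i + 1))

end
-- Section 1: letter/esum basics
lemma pair_x_eq (b : Letter) : pair Letter.x b = 2 * bar b := by cases b <;> rfl
lemma pair_eq_x (b : Letter) : pair b Letter.x = 2 * bar b := by cases b <;> rfl

lemma sum_map_two_mul (l : List Letter) (f : Letter → ℤ) :
    (l.map fun b => 2 * f b).sum = 2 * (l.map f).sum := by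
  induction l with
  | nil => simp
  | cons a t ih => simp [ih]; ring

lemma esum_zero (v : List Letter) : esum v 0 = 0 := rfl

lemma esum_succ (v : List Letter) (k : ℕ) (h : k < v.length) :
    esum v (k + 1) = esum v k + bar v[k] := by
  unfold esum
  rw [List.take_succ]
  simp only [List.getElem?_eq_getElem h, Option.toList_some, List.map_append,
    List.sum_append, List.map_cons, List.map_nil, List.sum_cons, List.sum_nil, add_zero]

lemma esum_length_le (v : List Letter) (k : ℕ) (h : v.length ≤ k) :
    esum v k = esum v v.length := by
  unfold esum
  rw [List.take_of_length_le h, List.take_length]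

lemma map_bar_sum_take (v : List Letter) (k : ℕ) :
    ((v.take k).map bar).sum = esum v k := rfl

lemma map_bar_sum (v : List Letter) : (v.map bar).sum = esum v v.length := by
  unfold esum; rw [List.take_length]

lemma map_bar_sum_drop (v : List Letter) (k : ℕ) :
    ((v.drop k).map bar).sum = esum v v.length - esum v k := by
  have h := congrArg (fun l : List Letter => (l.map bar).sum) (List.take_append_drop k v)
  simp only [List.map_append, List.sum_append] at h
  rw [map_bar_sum_take] at h
  rw [← map_bar_sum v]
  omega
noncomputable section
variable {F : Type*} [Field F]

lemma wd_mul (u v : List Letter) : (wd u : V F) * wd v = wd (u ++ v) := by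
  unfold wd
  rw [MonoidAlgebra.single_mul_single, one_mul]
  rfl

lemma shuffleWord_nil (q : F) (v : List Letter) : shuffleWord q [] v = wd v := by
  simp [shuffleWord]

lemma shuffleWord_x_left (q : F) (hq0 : q ≠ 0) (L : List Letter) :
    shuffleWord q [Letter.x] L = ∑ k ∈ Finset.range (L.length + 1),
      q ^ (((L.take k).map (fun b => pair Letter.x b)).sum) •
        wd (L.take k ++ Letter.x :: L.drop k) := by
  induction L with
  | nil => simp [shuffleWord]
  | cons b t ih =>
      have e1 : shuffleWord q [Letter.x] (b :: t) =
          wd (Letter.x :: b :: t) +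
            q ^ (pair Letter.x b) • (wd [b] * shuffleWord q [Letter.x] t) := by
        simp only [shuffleWord, shuffleWord_nil, wd_mul, List.map_cons, List.map_nil,
          List.sum_cons, List.sum_nil, add_zero, List.singleton_append, List.cons_append, List.nil_append]
      rw [e1, ih, Finset.mul_sum, Finset.smul_sum, List.length_cons]
      conv_rhs => rw [Finset.sum_range_succ']
      rw [add_comm (wd (Letter.x :: b :: t))]
      congr 1
      · apply Finset.sum_congr rfl
        intro k _
        rw [mul_smul_comm, wd_mul, smul_smul, ← zpow_add₀ hq0]
        simp only [List.take_succ_cons, List.drop_succ_cons, List.map_cons, List.sum_cons,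
          List.singleton_append, List.cons_append, List.nil_append]
      · simp


lemma shuffleWord_x_right (q : F) (hq0 : q ≠ 0) (L : List Letter) :
    shuffleWord q L [Letter.x] = ∑ k ∈ Finset.range (L.length + 1),
      q ^ (((L.drop k).map (fun b => pair b Letter.x)).sum) •
        wd (L.take k ++ Letter.x :: L.drop k) := by
  induction L with
  | nil => simp [shuffleWord]
  | cons b t ih =>
      have e1 : shuffleWord q (b :: t) [Letter.x] =
          (wd [b] * shuffleWord q t [Letter.x]) +
            q ^ (((b :: t).map (fun a => pair a Letter.x)).sum) • wd (Letter.x :: b :: t) := by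
        simp only [shuffleWord, wd_mul, List.singleton_append, List.cons_append, List.nil_append]
      rw [e1, ih, Finset.mul_sum, List.length_cons]
      conv_rhs => rw [Finset.sum_range_succ']
      congr 1
      · apply Finset.sum_congr rfl
        intro k _
        rw [mul_smul_comm, wd_mul]
        simp only [List.take_succ_cons, List.drop_succ_cons, List.singleton_append, List.cons_append, List.nil_append]
      all_goals simp

end
noncomputable section
variable {F : Type*} [Field F]

/-- left shuffle by a fixed word, as a linear map -/
def shufL (q : F) (u : List Letter) : V F →ₗ[F] V F where
  toFun b := b.coeff.sum fun v cv => cv • shuffleWord q u (FreeMonoid.toList v)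
  map_add' a b := by
    rw [MonoidAlgebra.coeff_add]
    exact Finsupp.sum_add_index (by simp) (by intros; rw [add_smul])
  map_smul' c b := by
    rw [RingHom.id_apply, MonoidAlgebra.coeff_smul, Finsupp.sum_smul_index (fun i => by rw [zero_smul]),
      Finsupp.smul_sum]
    exact Finsupp.sum_congr fun v _ => mul_smul c (b.coeff v) _

/-- right shuffle by a fixed word, as a linear map -/
def shufR (q : F) (v : List Letter) : V F →ₗ[F] V F where
  toFun a := a.coeff.sum fun u cu => cu • shuffleWord q (FreeMonoid.toList u) v
  map_add' a b := by
    rw [MonoidAlgebra.coeff_add]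
    exact Finsupp.sum_add_index (by simp) (by intros; rw [add_smul])
  map_smul' c b := by
    rw [RingHom.id_apply, MonoidAlgebra.coeff_smul, Finsupp.sum_smul_index (fun i => by rw [zero_smul]),
      Finsupp.smul_sum]
    exact Finsupp.sum_congr fun v _ => mul_smul c (b.coeff v) _

lemma shuffle_wd_left (q : F) (u : List Letter) (b : V F) :
    shuffle q (wd u) b = shufL q u b := by
  unfold shuffle wd
  rw [MonoidAlgebra.coeff_single, Finsupp.sum_single_index]
  · simp only [one_mul, shufL, LinearMap.coe_mk, AddHom.coe_mk]
    rfl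
  · simp [Finsupp.sum]

lemma shuffle_wd_right (q : F) (a : V F) (v : List Letter) :
    shuffle q a (wd v) = shufR q v a := by
  unfold shuffle wd
  show _ = a.coeff.sum fun u cu => cu • shuffleWord q (FreeMonoid.toList u) v
  apply Finsupp.sum_congr
  intro u _
  rw [MonoidAlgebra.coeff_single, Finsupp.sum_single_index] <;> simp

lemma shufL_apply (q : F) (u : List Letter) (b : V F) :
    shufL q u b = b.coeff.sum fun v cv => cv • shuffleWord q u (FreeMonoid.toList v) := rfl

lemma shufR_apply (q : F) (v : List Letter) (a : V F) :
    shufR q v a = a.coeff.sum fun u cu => cu • shuffleWord q (FreeMonoid.toList u) v := rfl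

lemma shufL_wd (q : F) (u w : List Letter) : shufL q u (wd w) = shuffleWord q u w := by
  rw [shufL_apply]
  unfold wd
  rw [MonoidAlgebra.coeff_single, Finsupp.sum_single_index] <;> simp

lemma shufR_wd (q : F) (v w : List Letter) : shufR q v (wd w) = shuffleWord q w v := by
  rw [shufR_apply]
  unfold wd
  rw [MonoidAlgebra.coeff_single, Finsupp.sum_single_index] <;> simp

lemma shuffle_wd_sum_right {ι : Type*} (q : F) (u : List Letter) (s : Finset ι)
    (d : ι → F) (w : ι → List Letter) :
    shuffle q (wd u) (∑ i ∈ s, d i • wd (w i)) =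
      ∑ i ∈ s, d i • shuffleWord q u (w i) := by
  rw [shuffle_wd_left, map_sum]
  exact Finset.sum_congr rfl fun i _ => by rw [map_smul, shufL_wd]

lemma shuffle_wd_sum_left {ι : Type*} (q : F) (v : List Letter) (s : Finset ι)
    (d : ι → F) (w : ι → List Letter) :
    shuffle q (∑ i ∈ s, d i • wd (w i)) (wd v) =
      ∑ i ∈ s, d i • shuffleWord q (w i) v := by
  rw [shuffle_wd_right, map_sum]
  exact Finset.sum_congr rfl fun i _ => by rw [map_smul, shufR_wd]

lemma catalanElt_mul_y (q : F) (m : ℕ) :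
    catalanElt q m * wd [Letter.y] =
      ∑ f : Fin (2 * m) → Letter,
        (if IsCatalan (List.ofFn f) then Ccoef q (List.ofFn f) else 0) •
          wd (List.ofFn f ++ [Letter.y]) := by
  unfold catalanElt
  rw [Finset.sum_mul]
  apply Finset.sum_congr rfl
  intro f _
  by_cases h : IsCatalan (List.ofFn f) <;>
    simp [h, smul_mul_assoc, wd_mul]

lemma catalanElt_eq (q : F) (m : ℕ) :
    catalanElt q m =
      ∑ f : Fin (2 * m) → Letter,
        (if IsCatalan (List.ofFn f) then Ccoef q (List.ofFn f) else 0) • wd (List.ofFn f) := by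
  unfold catalanElt
  apply Finset.sum_congr rfl
  intro f _
  by_cases h : IsCatalan (List.ofFn f) <;> simp [h]

end
-- Section: esum under eraseIdx / dropLast, insertion characterization
lemma esum_take_take (v : List Letter) (m t : ℕ) (h : m ≤ t) :
    esum (v.take t) m = esum v m := by
  unfold esum
  rw [List.take_take, min_eq_left h]

lemma esum_dropLast (u : List Letter) (i : ℕ) (h : i ≤ u.length - 1) :
    esum u.dropLast i = esum u i := by
  rw [List.dropLast_eq_take]
  exact esum_take_take u i _ h

lemma esum_drop_take (v : List Letter) (m t : ℕ) :
    (((v.drop m).take t).map bar).sum = esum v (m + t) - esum v m := by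
  have hdt : (v.drop m).take t = (v.take (m + t)).drop m := by
    rw [List.drop_take]; congr 1; omega
  rw [hdt, map_bar_sum_drop (v.take (m + t)) m]
  have h1 : esum (v.take (m+t)) m = esum v m := esum_take_take v m (m+t) (by omega)
  have h2 : esum (v.take (m+t)) (v.take (m+t)).length = esum v (m+t) := by
    rcases le_or_gt (m + t) v.length with hle | hlt
    · rw [List.length_take, min_eq_left hle]
      exact esum_take_take v (m+t) (m+t) le_rfl
    · rw [List.length_take, min_eq_right hlt.le, esum_length_le v (m+t) hlt.le]
      unfold esum
      rw [List.take_take, min_eq_left hlt.le, List.take_length]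
  rw [h1, h2]

lemma esum_eraseIdx_le (v : List Letter) (k i : ℕ) (hk : k ≤ v.length) (hik : i ≤ k) :
    esum (v.eraseIdx k) i = esum v i := by
  unfold esum
  rw [List.eraseIdx_eq_take_drop_succ, List.take_append]
  have h1 : i - (v.take k).length = 0 := by rw [List.length_take]; omega
  rw [h1, List.take_zero, List.append_nil, List.take_take, min_eq_left hik]

lemma esum_eraseIdx_ge (v : List Letter) (k i : ℕ) (hk : k < v.length) (hik : k ≤ i) :
    esum (v.eraseIdx k) i = esum v (i + 1) - bar v[k] := by
  unfold esum
  have hlt : (v.take k).length = k := by rw [List.length_take]; omega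
  rw [List.eraseIdx_eq_take_drop_succ, List.take_append, hlt,
    List.take_take, min_eq_right hik]
  rw [List.map_append, List.sum_append]
  rw [map_bar_sum_take, esum_drop_take]
  have h2 : k + 1 + (i - k) = i + 1 := by omega
  rw [h2, esum_succ v k hk]
  unfold esum
  ring

lemma ins_eq_iff (v L : List Letter) (k : ℕ) (hk : k < v.length)
    (hL : L.length + 1 = v.length) :
    L.take k ++ Letter.x :: L.drop k = v ↔ (L = v.eraseIdx k ∧ v[k] = Letter.x) := by
  have hkL : k ≤ L.length := by omega
  have htk : (L.take k).length = k := by rw [List.length_take]; omega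
  constructor
  · intro h
    subst h
    have herase : (L.take k ++ Letter.x :: L.drop k).eraseIdx k = L := by
      rw [List.eraseIdx_eq_take_drop_succ]
      rw [List.take_left' htk]
      have h3 : L.take k ++ Letter.x :: L.drop k = (L.take k ++ [Letter.x]) ++ L.drop k := by
        simp
      rw [h3, List.drop_left' (by simp [htk]), List.take_append_drop]
    refine ⟨herase.symm, ?_⟩
    rw [List.getElem_append_right htk.le]
    simp [htk]
  · rintro ⟨rfl, hx⟩
    rw [List.eraseIdx_eq_take_drop_succ]
    have htk2 : (v.take k).length = k := by rw [List.length_take]; omega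
    rw [List.take_append, htk2, List.take_take, min_eq_left le_rfl,
      Nat.sub_self, List.take_zero, List.append_nil]
    rw [List.drop_left' htk2]
    rw [← hx, ← List.drop_eq_getElem_cons hk, List.take_append_drop]

lemma sum_ofFn_delta {F : Type*} [Field F] {N : ℕ} (Φ : List Letter → F) (L₀ : List Letter)
    (h : ∀ L : List Letter, L.length = N → Φ L ≠ 0 → L = L₀) :
    ∑ f : Fin N → Letter, Φ (List.ofFn f) = if L₀.length = N then Φ L₀ else 0 := by
  by_cases hl : L₀.length = N
  · rw [if_pos hl]
    subst hl
    rw [Finset.sum_eq_single (L₀.get)]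
    · rw [List.ofFn_get]
    · intro g _ hg
      by_contra hne
      have hgl := h (List.ofFn g) (List.length_ofFn (f := g)) hne
      apply hg
      apply List.ofFn_injective
      rw [hgl, List.ofFn_get]
    · intro hb; exact absurd (Finset.mem_univ _) hb
  · rw [if_neg hl]
    apply Finset.sum_eq_zero
    intro g _
    by_contra hne
    have hgl := h (List.ofFn g) (List.length_ofFn (f := g)) hne
    rw [← hgl, List.length_ofFn] at hl
    exact hl rfl
section
variable {F : Type*} [Field F]

lemma qsub_ne (q : F) (hq0 : q ≠ 0) (hq : ∀ k : ℕ, 0 < k → q ^ k ≠ 1) :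
    q - q⁻¹ ≠ 0 := by
  intro h
  apply hq 2 (by norm_num)
  have hqq : q = q⁻¹ := sub_eq_zero.mp h
  rw [pow_two]
  nth_rewrite 2 [hqq]
  exact mul_inv_cancel₀ hq0

lemma qint_zero (q : F) : qint q 0 = 0 := by unfold qint; simp

lemma weight_eq (q : F) (hq0 : q ≠ 0) (hd : q - q⁻¹ ≠ 0) (e : ℤ) :
    q ^ (2*e+1) - q ^ (-(2*e+3)) =
      (q - q⁻¹) * q⁻¹ * ((qint q (e+2) - qint q e) * qint q (e+1)) := by
  have ha : q ^ e ≠ 0 := zpow_ne_zero e hq0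
  have h1 : q ^ (2*e+1) = q^e * q^e * q := by
    rw [show 2*e+1 = e + e + 1 by ring, zpow_add₀ hq0, zpow_add₀ hq0, zpow_one]
  have h2 : q ^ (-(2*e+3)) = (q^e * q^e * (q*q*q))⁻¹ := by
    rw [zpow_neg, show 2*e+3 = e + (e + (1+1+1)) by ring, zpow_add₀ hq0, zpow_add₀ hq0,
      zpow_add₀ hq0, zpow_add₀ hq0, zpow_one]
    ring_nf
  have h3 : q ^ (e+2) = q^e * (q*q) := by
    rw [show e+2 = e + (1+1) by ring, zpow_add₀ hq0, zpow_add₀ hq0, zpow_one]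
  have h4 : q ^ (-(e+2)) = (q^e * (q*q))⁻¹ := by rw [zpow_neg, h3]
  have h5 : q ^ (e+1) = q^e * q := by rw [zpow_add₀ hq0, zpow_one]
  have h6 : q ^ (-(e+1)) = (q^e * q)⁻¹ := by rw [zpow_neg, h5]
  have h7 : q ^ (-e) = (q^e)⁻¹ := by rw [zpow_neg]
  have hs : qint q (e+2) - qint q e = q^e * q + (q^e * q)⁻¹ := by
    unfold qint
    rw [h3, h4, h7, div_sub_div_same, div_eq_iff hd]
    field_simp
    ring
  have hp : qint q (e+1) = (q^e * q - (q^e * q)⁻¹) / (q - q⁻¹) := by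
    unfold qint; rw [h5, h6]
  rw [h1, h2, hs, hp]
  set d := q - q⁻¹ with hdef
  set S := q^e * q + (q^e * q)⁻¹ with hS
  set Y := q^e * q - (q^e * q)⁻¹ with hY
  have hdd : d * (Y * d⁻¹) = Y := by
    rw [mul_comm Y, ← mul_assoc, mul_inv_cancel₀ hd, one_mul]
  have hstep : d * q⁻¹ * (S * (Y / d)) = q⁻¹ * (S * Y) := by
    rw [div_eq_mul_inv]
    calc d * q⁻¹ * (S * (Y * d⁻¹)) = q⁻¹ * S * (d * (Y * d⁻¹)) := by ring
      _ = q⁻¹ * S * Y := by rw [hdd]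
      _ = q⁻¹ * (S * Y) := by ring
  rw [hstep, hS, hY]
  field_simp
  ring

end
noncomputable section
variable {F : Type*} [Field F]

/-- insertion of the letter x into L at position k -/
def insx (L : List Letter) (k : ℕ) : List Letter := L.take k ++ Letter.x :: L.drop k

/-- the k-th term of the reduced right-hand side, for target word v -/
def term (q : F) (v : List Letter) (k : ℕ) : F :=
  if IsCatalan ((v.eraseIdx k).dropLast) then
    Ccoef q ((v.eraseIdx k).dropLast) *
      ((q ^ ((1:ℤ) + ((((v.eraseIdx k).dropLast ++ [Letter.y]).take k).map
            (fun b => pair Letter.x b)).sum)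
        - q ^ ((-1:ℤ) + ((((v.eraseIdx k).dropLast ++ [Letter.y]).drop k).map
            (fun b => pair b Letter.x)).sum)) *
        (if insx ((v.eraseIdx k).dropLast ++ [Letter.y]) k = v then (1:F) else 0))
  else 0

/-- the telescoping quantity -/
def Afun (q : F) (v : List Letter) (t : ℕ) : F :=
  (∏ i ∈ Finset.range (t+1), qint q (1 + esum v i)) *
    ∏ j ∈ Finset.Ico t v.length, qint q (esum v j)

lemma pair_x_sum_take (u : List Letter) (k : ℕ) :
    ((u.take k).map (fun b => pair Letter.x b)).sum = 2 * esum u k := by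
  have h : (fun b => pair Letter.x b) = fun b => 2 * bar b := funext pair_x_eq
  rw [h, sum_map_two_mul, map_bar_sum_take]

lemma pair_x_sum_drop (u : List Letter) (k : ℕ) :
    ((u.drop k).map (fun b => pair b Letter.x)).sum =
      2 * (esum u u.length - esum u k) := by
  have h : (fun b => pair b Letter.x) = fun b => 2 * bar b := funext pair_eq_x
  rw [h, sum_map_two_mul, map_bar_sum_drop]

lemma bar_cases (a : Letter) : bar a = 1 ∧ a = Letter.x ∨ bar a = -1 ∧ a = Letter.y := by
  cases a <;> simp [bar]

lemma esum_concat_le (L : List Letter) (a : Letter) (i : ℕ) (hi : i ≤ L.length) :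
    esum (L ++ [a]) i = esum L i := by
  unfold esum
  rw [List.take_append]
  have h : i - L.length = 0 := by omega
  rw [h, List.take_zero, List.append_nil]

lemma esum_concat_y (L : List Letter) :
    esum (L ++ [Letter.y]) (L.length + 1) = esum L L.length - 1 := by
  unfold esum
  rw [List.take_of_length_le (by simp), List.take_length, List.map_append, List.sum_append]
  simp [bar]
  omega

lemma eraseIdx_len (v : List Letter) (k : ℕ) (hk : k < v.length) :
    (v.eraseIdx k).length = v.length - 1 := by
  rw [List.length_eraseIdx, if_pos hk]

/-- main case analysis facts, given that the delta condition holds -/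
lemma delta_facts (v : List Letter) (k : ℕ) (hk : k < v.length) (hN2 : 2 ≤ v.length)
    (hins : insx ((v.eraseIdx k).dropLast ++ [Letter.y]) k = v) :
    (v.eraseIdx k).dropLast ++ [Letter.y] = v.eraseIdx k ∧ v[k] = Letter.x := by
  have hw' : (v.eraseIdx k).length = v.length - 1 := eraseIdx_len v k hk
  have hL0 : ((v.eraseIdx k).dropLast).length = v.length - 2 := by
    rw [List.length_dropLast, hw']; omega
  have hLen : ((v.eraseIdx k).dropLast ++ [Letter.y]).length + 1 = v.length := by
    rw [List.length_append, hL0]; simp; omega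
  have h := (ins_eq_iff v _ k hk hLen).mp hins
  exact ⟨h.1, h.2⟩

end
noncomputable section
variable {F : Type*} [Field F]

lemma term_zero (q : F) (v : List Letter) (hnv : ¬ IsCatalan v)
    (hN2 : 2 ≤ v.length) (k : ℕ) (hk : k < v.length) : term q v k = 0 := by
  set N := v.length with hN
  set w' := v.eraseIdx k with hw'def
  set L0 := w'.dropLast with hL0def
  have hw' : w'.length = N - 1 := eraseIdx_len v k hk
  have hL0 : L0.length = N - 2 := by rw [hL0def, List.length_dropLast, hw']; omega
  unfold term
  by_cases hcat : IsCatalan L0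
  swap
  · rw [if_neg hcat]
  rw [if_pos hcat]
  by_cases hins : insx (L0 ++ [Letter.y]) k = v
  swap
  · rw [if_neg hins, mul_zero, mul_zero]
  obtain ⟨hC2, hx⟩ := delta_facts v k hk hN2 hins
  rw [← hw'def, ← hL0def] at hC2
  -- total elevation facts
  have hSw' : esum w' (N - 1) = -1 := by
    rw [← hC2]
    have h1 : N - 1 = L0.length + 1 := by omega
    rw [h1, esum_concat_y, hcat.2]
    norm_num
  have hbark : bar v[k] = 1 := by
    rcases bar_cases v[k] with ⟨h1, _⟩ | ⟨_, h2⟩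
    · exact h1
    · rw [hx] at h2; exact absurd h2 (by decide)
  have heN : esum v N = 0 := by
    have h1 := esum_eraseIdx_ge v k (N-1) hk (by omega)
    rw [← hw'def] at h1
    have h2 : N - 1 + 1 = N := by omega
    rw [h2, hbark] at h1
    omega
  rcases le_or_gt k (N - 2) with hkle | hkgt
  · -- v is Catalan after all: contradiction
    exfalso
    apply hnv
    constructor
    · intro i hi
      rcases le_or_gt i k with hik | hki
      · have h1 : esum L0 i = esum v i := by
          rw [hL0def, esum_dropLast _ _ (by omega), hw'def,
            esum_eraseIdx_le v k i (by omega) hik]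
        have h2 := hcat.1 i (by omega)
        omega
      · rcases Nat.eq_or_lt_of_le hi with hiN | hiN
        · have h0 : esum v i = 0 := by rw [hiN]; exact heN
          omega
        · -- k+1 ≤ i ≤ N-1 : use esum L0 (i-1) = esum v i - 1 ≥ 0
          have h1 : esum L0 (i-1) = esum v i - 1 := by
            rw [hL0def, esum_dropLast _ _ (by omega), hw'def,
              esum_eraseIdx_ge v k (i-1) hk (by omega), hbark]
            have h3 : i - 1 + 1 = i := by omega
            rw [h3]
          have h2 := hcat.1 (i-1) (by omega)
          omega
    · exact heN
  · -- k = N - 1 : the weight vanishes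
    have hkeq : k = N - 1 := by omega
    have hE1 : (((L0 ++ [Letter.y]).take k).map (fun b => pair Letter.x b)).sum = -2 := by
      rw [hC2, pair_x_sum_take]
      have h1 : esum w' k = esum w' (N-1) := by rw [hkeq]
      rw [h1, hSw']; ring
    have hE2 : (((L0 ++ [Letter.y]).drop k).map (fun b => pair b Letter.x)).sum = 0 := by
      rw [hC2, pair_x_sum_drop, hw']
      have h1 : esum w' k = esum w' (N-1) := by rw [hkeq]
      rw [h1]; ring
    rw [hE1, hE2]
    norm_num

end
noncomputable section
variable {F : Type*} [Field F]

lemma term_eq_tele (q : F) (hq0 : q ≠ 0) (hd : q - q⁻¹ ≠ 0) (v : List Letter)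
    (hv : IsCatalan v) (hN2 : 2 ≤ v.length) (k : ℕ) (hk : k < v.length) :
    term q v k = (q - q⁻¹) * (q⁻¹ * (Afun q v (k+1) - Afun q v k)) := by
  set w' := v.eraseIdx k with hw'def
  set L0 := w'.dropLast with hL0def
  have hw' : w'.length = v.length - 1 := eraseIdx_len v k hk
  have hL0 : L0.length = v.length - 2 := by rw [hL0def, List.length_dropLast, hw']; omega
  have heN : esum v v.length = 0 := hv.2
  have hes := esum_succ v k hk
  rcases bar_cases v[k] with ⟨hbark, hx⟩ | ⟨hbark, hx⟩
  · -- v[k] = x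
    have hkle : k ≤ v.length - 2 := by
      by_contra hcon
      have h2 : k + 1 = v.length := by omega
      rw [h2, hbark] at hes
      have h3 := hv.1 k hk.le
      omega
    have heN1 : esum v (v.length - 1) = 1 := by
      have hp : v.length - 1 < v.length := by omega
      have h1 := esum_succ v (v.length - 1) hp
      have h2 : v.length - 1 + 1 = v.length := by omega
      rw [h2] at h1
      have h3 := hv.1 (v.length - 1) (by omega)
      rcases bar_cases (v[v.length - 1]'hp) with ⟨hb, _⟩ | ⟨hb, _⟩ <;> omega
    have hSw' : esum w' (v.length - 1) = -1 := by
      rw [hw'def, esum_eraseIdx_ge v k (v.length - 1) hk (by omega),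
        show v.length - 1 + 1 = v.length by omega, heN, hbark]
      norm_num
    have hSw2 : esum w' (v.length - 2) = 0 := by
      rw [hw'def, esum_eraseIdx_ge v k (v.length - 2) hk (by omega),
        show v.length - 2 + 1 = v.length - 1 by omega, heN1, hbark]
      norm_num
    have hC2 : L0 ++ [Letter.y] = w' := by
      have hne : w' ≠ [] := List.ne_nil_of_length_pos (by omega)
      have hlast : w'.getLast hne = Letter.y := by
        have hp : w'.length - 1 < w'.length := by omega
        have hb := esum_succ w' (w'.length - 1) hp
        rw [show w'.length - 1 + 1 = w'.length by omega] at hb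
        have hq1 : esum w' w'.length = -1 := by rw [hw']; exact hSw'
        have hq2 : esum w' (w'.length - 1) = 0 := by
          rw [hw', show v.length - 1 - 1 = v.length - 2 by omega]; exact hSw2
        rw [List.getLast_eq_getElem]
        rcases bar_cases (w'[w'.length - 1]'hp) with ⟨hb1, hl⟩ | ⟨hb1, hl⟩
        · omega
        · exact hl
      have hgl := List.dropLast_append_getLast hne
      rw [hlast] at hgl
      exact hgl
    have hLenEq : (L0 ++ [Letter.y]).length + 1 = v.length := by
      rw [List.length_append, hL0]; simp; omega
    have hδ : insx (L0 ++ [Letter.y]) k = v :=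
      (ins_eq_iff v (L0 ++ [Letter.y]) k hk hLenEq).mpr ⟨hC2.trans hw'def, hx⟩
    have hE1 : (((L0 ++ [Letter.y]).take k).map (fun b => pair Letter.x b)).sum
        = 2 * esum v k := by
      rw [hC2, pair_x_sum_take, hw'def, esum_eraseIdx_le v k k hk.le le_rfl]
    have hE2 : (((L0 ++ [Letter.y]).drop k).map (fun b => pair b Letter.x)).sum
        = 2 * (-1 - esum v k) := by
      rw [hC2, pair_x_sum_drop, hw', hSw', hw'def, esum_eraseIdx_le v k k hk.le le_rfl]
    by_cases hcat : IsCatalan L0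
    · -- main identity
      unfold term
      rw [← hw'def, ← hL0def, if_pos hcat, if_pos hδ, mul_one, hE1, hE2]
      rw [show (1:ℤ) + 2 * esum v k = 2 * esum v k + 1 by ring,
        show (-1:ℤ) + 2 * (-1 - esum v k) = -(2 * esum v k + 3) by ring]
      rw [weight_eq q hq0 hd (esum v k)]
      have hCc : Ccoef q L0 =
          (∏ i ∈ Finset.range (k+1), qint q (1 + esum v i)) *
            ∏ j ∈ Finset.Ico (k+2) v.length, qint q (esum v j) := by
        unfold Ccoef
        rw [hL0]
        rw [show Finset.range (v.length - 2 + 1) = Finset.Ico 0 (v.length - 1) by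
          rw [Finset.range_eq_Ico]; congr 1; omega]
        rw [← Finset.prod_Ico_consecutive _ (Nat.zero_le (k+1))
          (show k+1 ≤ v.length - 1 by omega)]
        congr 1
        · rw [show Finset.Ico 0 (k+1) = Finset.range (k+1) by rw [Finset.range_eq_Ico]]
          apply Finset.prod_congr rfl
          intro i hi
          rw [Finset.mem_range] at hi
          congr 1
          rw [hL0def, esum_dropLast _ _ (by omega), hw'def,
            esum_eraseIdx_le v k i hk.le (by omega)]
        · rw [show Finset.Ico (k+2) v.length = Finset.Ico (k+1+1) (v.length - 1 + 1) by
            congr 1; omega]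
          rw [← Finset.prod_Ico_add' (fun j => qint q (esum v j)) (k+1) (v.length-1) 1]
          apply Finset.prod_congr rfl
          intro i hi
          rw [Finset.mem_Ico] at hi
          have he : esum L0 i = esum v (i+1) - 1 := by
            rw [hL0def, esum_dropLast _ _ (by omega), hw'def,
              esum_eraseIdx_ge v k i hk (by omega), hbark]
          rw [he]
          congr 1
          ring
      have hA1 : Afun q v (k+1) - Afun q v k =
          (qint q (esum v k + 2) - qint q (esum v k)) * qint q (esum v k + 1) *
            ((∏ i ∈ Finset.range (k+1), qint q (1 + esum v i)) *
              ∏ j ∈ Finset.Ico (k+2) v.length, qint q (esum v j)) := by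
        unfold Afun
        rw [Finset.prod_range_succ]
        rw [Finset.prod_eq_prod_Ico_succ_bot (show k < v.length from hk)
          (fun j => qint q (esum v j))]
        rw [Finset.prod_eq_prod_Ico_succ_bot (show k + 1 < v.length by omega)
          (fun j => qint q (esum v j))]
        rw [hes, hbark]
        rw [show (1:ℤ) + (esum v k + 1) = esum v k + 2 by ring]
        ring
      rw [hCc, hA1]
      ring
    · -- L0 not Catalan : both sides vanish
      unfold term
      rw [← hw'def, ← hL0def, if_neg hcat]
      have hL0total : esum L0 L0.length = 0 := by
        rw [hL0, hL0def, esum_dropLast _ _ (by omega)]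
        exact hSw2
      have hex : ∃ i, i ≤ L0.length ∧ esum L0 i < 0 := by
        by_contra hcon
        push_neg at hcon
        exact hcat ⟨fun i hi => (hcon i hi), hL0total⟩
      obtain ⟨i, hi, hneg⟩ := hex
      have hki : k < i := by
        by_contra hcon
        push_neg at hcon
        have h1 : esum L0 i = esum v i := by
          rw [hL0def, esum_dropLast _ _ (by omega), hw'def,
            esum_eraseIdx_le v k i hk.le hcon]
        have h2 := hv.1 i (by omega)
        omega
      have hz : esum v (i+1) = 0 := by
        have h1 : esum L0 i = esum v (i+1) - 1 := by
          rw [hL0def, esum_dropLast _ _ (by omega), hw'def,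
            esum_eraseIdx_ge v k i hk (by omega), hbark]
        have h2 := hv.1 (i+1) (by omega)
        omega
      have hz1 : Afun q v (k+1) = 0 := by
        unfold Afun
        apply mul_eq_zero_of_right
        apply Finset.prod_eq_zero (i := i+1) (Finset.mem_Ico.mpr ⟨by omega, by omega⟩)
        rw [hz, qint_zero]
      have hz0 : Afun q v k = 0 := by
        unfold Afun
        apply mul_eq_zero_of_right
        apply Finset.prod_eq_zero (i := i+1) (Finset.mem_Ico.mpr ⟨by omega, by omega⟩)
        rw [hz, qint_zero]
      rw [hz1, hz0, sub_self, mul_zero, mul_zero]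
  · -- v[k] = y : both sides vanish
    unfold term
    rw [← hw'def, ← hL0def]
    have hδ : insx (L0 ++ [Letter.y]) k ≠ v := by
      intro hcon
      obtain ⟨_, hx'⟩ := delta_facts v k hk hN2 hcon
      rw [hx] at hx'
      exact absurd hx' (by decide)
    have hA : Afun q v (k+1) = Afun q v k := by
      unfold Afun
      rw [Finset.prod_range_succ,
        Finset.prod_eq_prod_Ico_succ_bot (show k < v.length from hk)
          (fun j => qint q (esum v j))]
      rw [show (1:ℤ) + esum v (k+1) = esum v k by rw [hes, hbark]; ring]
      ring
    rw [hA, sub_self, mul_zero, mul_zero]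
    by_cases hcat : IsCatalan L0
    · rw [if_pos hcat, if_neg hδ, mul_zero, mul_zero]
    · rw [if_neg hcat]

end
noncomputable section
variable {F : Type*} [Field F]

lemma Vsum_apply {ι : Type*} (s : Finset ι) (g : ι → V F) (m : FreeMonoid Letter) :
    (∑ i ∈ s, g i).coeff m = ∑ i ∈ s, (g i).coeff m := by
  rw [MonoidAlgebra.coeff_sum, Finsupp.finset_sum_apply]

lemma Vsmul_apply (c : F) (a : V F) (m : FreeMonoid Letter) : (c • a).coeff m = c * a.coeff m := by
  rw [MonoidAlgebra.coeff_smul, Finsupp.smul_apply, smul_eq_mul]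

lemma wd_apply (L : List Letter) (m : FreeMonoid Letter) :
    (wd L : V F).coeff m = if L = FreeMonoid.toList m then 1 else 0 := by
  unfold wd
  rw [MonoidAlgebra.coeff_single_apply]
  congr 1

/-- the function of L whose sum over words of length 2(n-1) gives the k-th reduced term -/
def PhiK (q : F) (v : List Letter) (k : ℕ) (L : List Letter) : F :=
  (if IsCatalan L then Ccoef q L else 0) *
    ((q ^ ((1:ℤ) + (((L ++ [Letter.y]).take k).map (fun b => pair Letter.x b)).sum)
      - q ^ ((-1:ℤ) + (((L ++ [Letter.y]).drop k).map (fun b => pair b Letter.x)).sum)) *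
      (if insx (L ++ [Letter.y]) k = v then (1:F) else 0))

lemma PhiK_L0 (q : F) (v : List Letter) (k : ℕ) :
    PhiK q v k ((v.eraseIdx k).dropLast) = term q v k := by
  unfold PhiK term
  by_cases hcat : IsCatalan ((v.eraseIdx k).dropLast)
  · rw [if_pos hcat, if_pos hcat]
  · rw [if_neg hcat, if_neg hcat, zero_mul]

lemma length_insx (L : List Letter) (k : ℕ) : (insx L k).length = L.length + 1 := by
  unfold insx
  rw [List.length_append, List.length_cons, List.length_take, List.length_drop]
  omega

lemma PhiK_det (q : F) (v : List Letter) (k n : ℕ) (hn : 1 ≤ n) (hk : k < 2*n) :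
    ∀ L : List Letter, L.length = 2*(n-1) → PhiK q v k L ≠ 0 →
      L = (v.eraseIdx k).dropLast := by
  intro L hL hΦ
  have hδ : insx (L ++ [Letter.y]) k = v := by
    by_contra hcon
    apply hΦ
    unfold PhiK
    rw [if_neg hcon, mul_zero, mul_zero]
  have hvlen : v.length = 2*n := by
    rw [← hδ, length_insx, List.length_append, hL]
    simp only [List.length_cons, List.length_nil]
    omega
  have hk' : k < v.length := by omega
  have hLen : (L ++ [Letter.y]).length + 1 = v.length := by
    rw [List.length_append, hL]
    simp only [List.length_cons, List.length_nil]
    omega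
  have h := (ins_eq_iff v (L ++ [Letter.y]) k hk' hLen).mp hδ
  rw [← h.1, List.dropLast_concat]

lemma term_of_bad_len (q : F) (v : List Letter) (k : ℕ)
    (h : ((v.eraseIdx k).dropLast).length + 2 ≠ v.length) : term q v k = 0 := by
  unfold term
  by_cases hcat : IsCatalan ((v.eraseIdx k).dropLast)
  · rw [if_pos hcat]
    have hδ : insx ((v.eraseIdx k).dropLast ++ [Letter.y]) k ≠ v := by
      intro hc
      have hlenc := congrArg List.length hc
      rw [length_insx, List.length_append] at hlenc
      simp only [List.length_cons, List.length_nil] at hlenc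
      omega
    rw [if_neg hδ, mul_zero, mul_zero]
  · rw [if_neg hcat]

end
noncomputable section
variable {F : Type*} [Field F]

lemma main_scalar (q : F) (hq0 : q ≠ 0) (hd : q - q⁻¹ ≠ 0) (n : ℕ) (hn : 1 ≤ n)
    (v : List Letter) :
    q⁻¹ * (∑ g : Fin (2*n) → Letter,
        (if IsCatalan (List.ofFn g) then Ccoef q (List.ofFn g) else 0) * (if List.ofFn g = v then (1:F) else 0))
    = (q - q⁻¹)⁻¹ * ∑ k ∈ Finset.range (2*n), ∑ f : Fin (2*(n-1)) → Letter,
        ((if IsCatalan (List.ofFn f) then Ccoef q (List.ofFn f) else 0) *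
          (q ^ ((1:ℤ) + (((List.ofFn f ++ [Letter.y]).take k).map (fun b => pair Letter.x b)).sum)
            - q ^ ((-1:ℤ) + (((List.ofFn f ++ [Letter.y]).drop k).map (fun b => pair b Letter.x)).sum))) *
          (if insx (List.ofFn f ++ [Letter.y]) k = v then (1:F) else 0) := by
  have hLred : (∑ g : Fin (2*n) → Letter,
      (if IsCatalan (List.ofFn g) then Ccoef q (List.ofFn g) else 0) * (if List.ofFn g = v then (1:F) else 0))
      = if v.length = 2*n then (if IsCatalan v then Ccoef q v else 0) else 0 := by
    have h := sum_ofFn_delta (N := 2*n)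
      (fun L => (if IsCatalan L then Ccoef q L else 0) * (if L = v then (1:F) else 0)) v
      (fun L _ hΦ => by
        by_contra hc
        apply hΦ
        show (if IsCatalan L then Ccoef q L else 0) * (if L = v then (1:F) else 0) = 0
        rw [if_neg hc, mul_zero])
    rw [h]
    by_cases hvl : v.length = 2*n
    · rw [if_pos hvl, if_pos hvl]
      show (if IsCatalan v then Ccoef q v else 0) * (if v = v then (1:F) else 0) = _
      rw [if_pos rfl, mul_one]
    · rw [if_neg hvl, if_neg hvl]
  have hRred : ∀ k ∈ Finset.range (2*n),
      (∑ f : Fin (2*(n-1)) → Letter,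
        ((if IsCatalan (List.ofFn f) then Ccoef q (List.ofFn f) else 0) *
          (q ^ ((1:ℤ) + (((List.ofFn f ++ [Letter.y]).take k).map (fun b => pair Letter.x b)).sum)
            - q ^ ((-1:ℤ) + (((List.ofFn f ++ [Letter.y]).drop k).map (fun b => pair b Letter.x)).sum))) *
          (if insx (List.ofFn f ++ [Letter.y]) k = v then (1:F) else 0))
      = if ((v.eraseIdx k).dropLast).length = 2*(n-1) then term q v k else 0 := by
    intro k hk
    rw [Finset.mem_range] at hk
    have h1 : ∀ f : Fin (2*(n-1)) → Letter,
        ((if IsCatalan (List.ofFn f) then Ccoef q (List.ofFn f) else 0) *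
          (q ^ ((1:ℤ) + (((List.ofFn f ++ [Letter.y]).take k).map (fun b => pair Letter.x b)).sum)
            - q ^ ((-1:ℤ) + (((List.ofFn f ++ [Letter.y]).drop k).map (fun b => pair b Letter.x)).sum))) *
          (if insx (List.ofFn f ++ [Letter.y]) k = v then (1:F) else 0)
        = PhiK q v k (List.ofFn f) := by
      intro f
      unfold PhiK
      ring
    rw [Finset.sum_congr rfl (fun f _ => h1 f)]
    rw [sum_ofFn_delta _ _ (PhiK_det q v k n hn hk), PhiK_L0]
  rw [hLred, Finset.sum_congr rfl hRred]
  by_cases hvl : v.length = 2*n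
  · rw [if_pos hvl]
    have hall : ∀ k ∈ Finset.range (2*n),
        (if ((v.eraseIdx k).dropLast).length = 2*(n-1) then term q v k else 0)
          = term q v k := by
      intro k hk
      rw [Finset.mem_range] at hk
      rw [if_pos]
      rw [List.length_dropLast, eraseIdx_len v k (by omega)]
      omega
    rw [Finset.sum_congr rfl hall]
    by_cases hcat : IsCatalan v
    · rw [if_pos hcat]
      rw [Finset.sum_congr rfl (fun k hk => term_eq_tele q hq0 hd v hcat (by omega) k
        (by rw [Finset.mem_range] at hk; omega))]
      rw [← Finset.mul_sum, ← Finset.mul_sum,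
        Finset.sum_range_sub (f := fun t => Afun q v t)]
      have hA2n : Afun q v (2*n) = Ccoef q v := by
        unfold Afun Ccoef
        rw [hvl, Finset.Ico_self, Finset.prod_empty, mul_one]
      have hA0 : Afun q v 0 = 0 := by
        unfold Afun
        apply mul_eq_zero_of_right
        refine Finset.prod_eq_zero (i := 0) (Finset.mem_Ico.mpr ⟨le_rfl, by omega⟩) ?_
        rw [esum_zero, qint_zero]
      rw [hA2n, hA0, sub_zero, ← mul_assoc, inv_mul_cancel₀ hd, one_mul]
    · rw [if_neg hcat]
      rw [Finset.sum_congr rfl (fun k hk => term_zero q v hcat (by omega) k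
        (by rw [Finset.mem_range] at hk; omega))]
      rw [Finset.sum_const_zero, mul_zero, mul_zero]
  · rw [if_neg hvl]
    have hz : ∀ k ∈ Finset.range (2*n),
        (if ((v.eraseIdx k).dropLast).length = 2*(n-1) then term q v k else 0) = 0 := by
      intro k _
      by_cases hlenc : ((v.eraseIdx k).dropLast).length = 2*(n-1)
      · rw [if_pos hlenc, term_of_bad_len]
        rw [hlenc]; omega
      · rw [if_neg hlenc]
    rw [Finset.sum_congr rfl hz, Finset.sum_const_zero, mul_zero, mul_zero]

end
theorem stmt16 {F : Type*} [Field F] (q : F) (hq0 : q ≠ 0)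
    (hq : ∀ k : ℕ, 0 < k → q ^ k ≠ 1) (n : ℕ) (hn : 1 ≤ n) :
    q⁻¹ • catalanElt q n =
      (q - q⁻¹)⁻¹ • (q • shuffle q (wd [Letter.x]) (catalanElt q (n - 1) * wd [Letter.y])
        - q⁻¹ • shuffle q (catalanElt q (n - 1) * wd [Letter.y]) (wd [Letter.x]) : V F) := by
  classical
  have hd : q - q⁻¹ ≠ 0 := qsub_ne q hq0 hq
  have key : ∀ f : Fin (2*(n-1)) → Letter,
      (q • ((if IsCatalan (List.ofFn f) then Ccoef q (List.ofFn f) else 0) •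
          shuffleWord q [Letter.x] (List.ofFn f ++ [Letter.y]))
        - q⁻¹ • ((if IsCatalan (List.ofFn f) then Ccoef q (List.ofFn f) else 0) •
          shuffleWord q (List.ofFn f ++ [Letter.y]) [Letter.x]))
      = ∑ k ∈ Finset.range (2*n),
          ((if IsCatalan (List.ofFn f) then Ccoef q (List.ofFn f) else 0) *
            (q ^ ((1:ℤ) + (((List.ofFn f ++ [Letter.y]).take k).map (fun b => pair Letter.x b)).sum)
              - q ^ ((-1:ℤ) + (((List.ofFn f ++ [Letter.y]).drop k).map (fun b => pair b Letter.x)).sum)))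
            • wd (insx (List.ofFn f ++ [Letter.y]) k) := by
    intro f
    have hlen : (List.ofFn f ++ [Letter.y]).length + 1 = 2*n := by
      rw [List.length_append, List.length_ofFn]
      simp only [List.length_cons, List.length_nil]
      omega
    rw [shuffleWord_x_left q hq0, shuffleWord_x_right q hq0, Finset.smul_sum, Finset.smul_sum,
      Finset.smul_sum, Finset.smul_sum, ← Finset.sum_sub_distrib, hlen]
    apply Finset.sum_congr rfl
    intro k _
    rw [smul_smul, smul_smul, smul_smul, smul_smul, ← sub_smul]
    show _ = _ • wd ((List.ofFn f ++ [Letter.y]).take k ++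
      Letter.x :: (List.ofFn f ++ [Letter.y]).drop k)
    congr 1
    rw [zpow_add₀ hq0, zpow_add₀ hq0, zpow_one, zpow_neg_one]
    ring
  have key2 : q • shuffle q (wd [Letter.x]) (catalanElt q (n - 1) * wd [Letter.y])
        - q⁻¹ • shuffle q (catalanElt q (n - 1) * wd [Letter.y]) (wd [Letter.x])
      = ∑ f : Fin (2*(n-1)) → Letter, ∑ k ∈ Finset.range (2*n),
          ((if IsCatalan (List.ofFn f) then Ccoef q (List.ofFn f) else 0) *
            (q ^ ((1:ℤ) + (((List.ofFn f ++ [Letter.y]).take k).map (fun b => pair Letter.x b)).sum)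
              - q ^ ((-1:ℤ) + (((List.ofFn f ++ [Letter.y]).drop k).map (fun b => pair b Letter.x)).sum)))
            • wd (insx (List.ofFn f ++ [Letter.y]) k) := by
    rw [catalanElt_mul_y, shuffle_wd_sum_right, shuffle_wd_sum_left,
      Finset.smul_sum, Finset.smul_sum, ← Finset.sum_sub_distrib]
    exact Finset.sum_congr rfl fun f _ => key f
  rw [key2, Finset.sum_comm, catalanElt_eq]
  refine MonoidAlgebra.ext (Finsupp.ext fun m => ?_)
  simp only [Vsum_apply, Vsmul_apply, wd_apply]
  exact main_scalar q hq0 hd n hn (FreeMonoid.toList m)
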